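/- Let H ≠ ℕ be a numerical semigroup with Frobenius number f = f(H), let k be a field, and set R = k[[H]]. If f − 1 ∉ QF(H), then t ∉ ω_Hⁿ for every n ≥ 1; in particular ω_Hⁿ ≠ k[[t]] for all n ≥ 1. -/

import Mathlib

set_option synthInstance.maxHeartbeats 400000
set_option maxHeartbeats 1000000

/-- The Frobenius number of a numerical semigroup `H ⊆ ℕ`: the largest natural number
not in `H` (meaningful when `H ≠ ℕ` and the complement of `H` is finite). -/
noncomputable def frobeniusNumber (H : AddSubmonoid ℕ) : ℕ :=
  sSup {x : ℕ | x ∉ H}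

/-- The set of quasi-Frobenius numbers of a numerical semigroup `H`:
`QF(H) = {x ∈ ℕ \ H : x + h ∈ H for every nonzero h ∈ H}`. -/
def QF (H : AddSubmonoid ℕ) : Set ℕ :=
  {x | x ∉ H ∧ ∀ h ∈ H, h ≠ 0 → x + h ∈ H}

/-- The semigroup power series ring `k[[H]]`: the subalgebra of `k[[t]]` of power series
whose `i`-th coefficient vanishes for all `i ∉ H`. -/
noncomputable def semigroupAlgebra (k : Type*) [Field k] (H : AddSubmonoid ℕ) :
    Subalgebra k (PowerSeries k) where
  carrier := {g | ∀ i : ℕ, i ∉ H → PowerSeries.coeff (R := k) i g = 0}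
  mul_mem' := by
    intro a b ha hb i hi
    rw [PowerSeries.coeff_mul]
    refine Finset.sum_eq_zero ?_
    rintro ⟨p, q⟩ hpq
    replace hpq : p + q = i := by simpa using hpq
    dsimp only
    by_cases hp : p ∈ H
    · by_cases hq : q ∈ H
      · exact absurd (hpq ▸ H.add_mem hp hq) hi
      · rw [hb q hq, mul_zero]
    · rw [ha p hp, zero_mul]
  one_mem' := by
    intro i hi
    have h0 : i ≠ 0 := fun h => hi (h ▸ H.zero_mem)
    rw [PowerSeries.coeff_one, if_neg h0]
  add_mem' := by
    intro a b ha hb i hi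
    rw [map_add, ha i hi, hb i hi, add_zero]
  zero_mem' := by
    intro i hi
    rw [map_zero]
  algebraMap_mem' := by
    intro r i hi
    have h0 : i ≠ 0 := fun h => hi (h ▸ H.zero_mem)
    simp only [PowerSeries.algebraMap_apply, PowerSeries.coeff_C, if_neg h0]

/-- The canonical module `ω_H` of `k[[H]]`: the `k[[H]]`-submodule of `k[[t]]`
generated by the monomials `t^(f(H) - x)` for `x ∈ QF(H)`. -/
noncomputable def canonicalModule (k : Type*) [Field k] (H : AddSubmonoid ℕ) :
    Submodule ↥(semigroupAlgebra k H) (PowerSeries k) :=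
  Submodule.span ↥(semigroupAlgebra k H)
    ((fun x => (PowerSeries.X : PowerSeries k) ^ (frobeniusNumber H - x)) '' QF H)



lemma coeff_one_mul' {k : Type*} [Field k] (a b : PowerSeries k) :
    PowerSeries.coeff (R := k) 1 (a * b) =
      PowerSeries.coeff (R := k) 0 a * PowerSeries.coeff (R := k) 1 b +
      PowerSeries.coeff (R := k) 1 a * PowerSeries.coeff (R := k) 0 b := by
  rw [PowerSeries.coeff_mul, Finset.Nat.sum_antidiagonal_eq_sum_range_succ_mk]
  simp [Finset.sum_range_succ]

/-- Let `H ≠ ℕ` be a numerical semigroup with Frobenius number `f` and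
`R = k[[H]]`. If `f - 1 ∉ QF(H)`, then `t ∉ ω_Hⁿ` for every `n ≥ 1`; in particular
`ω_Hⁿ ≠ k[[t]]` for all `n ≥ 1`. -/
theorem stmt11 (k : Type*) [Field k] (H : AddSubmonoid ℕ)
    (hfin : ((H : Set ℕ)ᶜ).Finite) (hne : H ≠ ⊤)
    (hqf : frobeniusNumber H - 1 ∉ QF H) :
    ∀ n : ℕ, 1 ≤ n → (PowerSeries.X : PowerSeries k) ∉ canonicalModule k H ^ n
      ∧ canonicalModule k H ^ n ≠ ⊤ := by
  intro n hn
  -- 1 ∉ H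
  have h1H : (1 : ℕ) ∉ H := by
    intro h1
    apply hne
    ext m
    simp only [AddSubmonoid.mem_top, iff_true]
    have : m • (1 : ℕ) ∈ H := AddSubmonoid.nsmul_mem H h1 m
    simpa using this
  -- the submodule of power series with vanishing first coefficient
  set M : Submodule ↥(semigroupAlgebra k H) (PowerSeries k) :=
    { carrier := {g | PowerSeries.coeff (R := k) 1 g = 0}
      add_mem' := by
        intro a b ha hb
        simp only [Set.mem_setOf_eq] at *
        rw [map_add, ha, hb, add_zero]
      zero_mem' := by simp
      smul_mem' := by
        intro r g hg
        simp only [Set.mem_setOf_eq] at *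
        show PowerSeries.coeff (R := k) 1 ((r : PowerSeries k) * g) = 0
        rw [coeff_one_mul', hg, r.2 1 h1H, mul_zero, zero_mul, add_zero] } with hM
  have hMmem : ∀ g : PowerSeries k, g ∈ M ↔ PowerSeries.coeff (R := k) 1 g = 0 := fun g => Iff.rfl
  -- the canonical module is contained in M
  have hωM : canonicalModule k H ≤ M := by
    rw [canonicalModule, Submodule.span_le]
    rintro _ ⟨x, hx, rfl⟩
    rw [SetLike.mem_coe, hMmem, PowerSeries.coeff_X_pow]
    rw [if_neg]
    intro h
    have : frobeniusNumber H - 1 = x := by omega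
    exact hqf (this ▸ hx)
  -- all powers are contained in M
  have hpow : ∀ m : ℕ, 1 ≤ m → canonicalModule k H ^ m ≤ M := by
    intro m hm
    induction m with
    | zero => omega
    | succ p ih =>
      rcases Nat.eq_or_lt_of_le hm with h | h
      · rw [← h]
        exact le_trans (le_of_eq (Submodule.pow_one _)) hωM
      · have hp : 1 ≤ p := by omega
        rw [Submodule.pow_succ, Submodule.mul_le]
        intro a ha b hb
        have ha' := ih hp ha
        have hb' := hωM hb
        rw [hMmem] at *
        rw [coeff_one_mul', ha', hb', mul_zero, zero_mul, add_zero]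
  have hX : (PowerSeries.X : PowerSeries k) ∉ M := by
    rw [hMmem]
    simp
  constructor
  · intro hXin
    exact hX (hpow n hn hXin)
  · intro htop
    exact hX (hpow n hn (htop ▸ Submodule.mem_top))
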